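/- Let H be a self-adjoint operator on a Hilbert space with domain D, and let P be an orthogonal projection with PD ⊆ D such that the commutator [H,P] extends to a bounded operator with ‖[H,P]‖ ≤ d. Then for every s ∈ ℝ, ‖[e^{-iHs}, P]‖ ≤ |s|·d. -/

import Mathlib

open scoped LinearPMap

local notation "⟪" x ", " y "⟫" => @inner ℂ _ _ x y

section Aux

variable {𝓗 : Type*} [NormedAddCommGroup 𝓗] [InnerProductSpace ℂ 𝓗] [CompleteSpace 𝓗]

theorem aux_sym {T : 𝓗 →ₗ.[ℂ] 𝓗} (hT : IsSelfAdjoint T) (u v : T.domain) :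
    ⟪(T u : 𝓗), (v : 𝓗)⟫ = ⟪(u : 𝓗), (T v : 𝓗)⟫ := by
  have hdense : Dense (T.domain : Set 𝓗) := hT.dense_domain
  have hadj : T† = T := LinearPMap.isSelfAdjoint_def.mp hT
  have h := LinearPMap.adjoint_isFormalAdjoint (T := T) hdense
  rw [hadj] at h
  exact h u v

theorem aux_mem {T : 𝓗 →ₗ.[ℂ] 𝓗} (hT : IsSelfAdjoint T) (y w : 𝓗)
    (h : ∀ x : T.domain, ⟪(T x : 𝓗), y⟫ = ⟪(x : 𝓗), w⟫) :
    ∃ hy : y ∈ T.domain, T ⟨y, hy⟩ = w := by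
  have hdense : Dense (T.domain : Set 𝓗) := hT.dense_domain
  have hadj : T† = T := LinearPMap.isSelfAdjoint_def.mp hT
  have hy' : y ∈ T†.domain := by
    refine LinearPMap.mem_adjoint_domain_of_exists y ⟨w, fun x => ?_⟩
    rw [← inner_conj_symm, ← h x, inner_conj_symm]
  rw [hadj] at hy'
  refine ⟨hy', Dense.eq_of_inner_right ℂ hdense fun v hv => ?_⟩
  exact (aux_sym hT ⟨v, hv⟩ ⟨y, hy'⟩).symm.trans (h ⟨v, hv⟩)

end Aux

/-- if `H` is a self-adjoint operator with domain `D`, `P` an orthogonal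
projection with `P D ⊆ D` such that the commutator `[H, P]` extends to a bounded
operator `C` with `‖C‖ ≤ d`, and `U s = e^{-iHs}` is the unitary group generated by
`H`, then `‖[U s, P]‖ ≤ |s| · d` for every `s ∈ ℝ`. -/
theorem commutator_unitary_group_projection_bound
    {𝓗 : Type*} [NormedAddCommGroup 𝓗] [InnerProductSpace ℂ 𝓗] [CompleteSpace 𝓗]
    (T : 𝓗 →ₗ.[ℂ] 𝓗) (hT : IsSelfAdjoint T)
    (P : 𝓗 →L[ℂ] 𝓗) (hP2 : P ∘L P = P) (hPsa : IsSelfAdjoint P)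
    (hPD : ∀ x ∈ T.domain, P x ∈ T.domain)
    (d : ℝ) (C : 𝓗 →L[ℂ] 𝓗) (hCn : ‖C‖ ≤ d)
    (hC : ∀ x : T.domain, C x = T ⟨P x, hPD x x.2⟩ - P (T x))
    (U : ℝ → (𝓗 →L[ℂ] 𝓗))
    (hUiso : ∀ (s : ℝ) (x : 𝓗), ‖U s x‖ = ‖x‖)
    (hU0 : U 0 = 1)
    (hUgrp : ∀ s t : ℝ, U (s + t) = U s ∘L U t)
    (hUder : ∀ (x : T.domain) (s : ℝ),
      HasDerivAt (fun r : ℝ => U r (x : 𝓗)) ((-Complex.I) • U s (T x)) s) :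
    ∀ s : ℝ, ‖U s ∘L P - P ∘L U s‖ ≤ |s| * d := by
  have hdense : Dense (T.domain : Set 𝓗) := hT.dense_domain
  have hd0 : (0:ℝ) ≤ d := le_trans (norm_nonneg C) hCn
  -- unitary group basics
  have hUU : ∀ (a b : ℝ) (x : 𝓗), U a (U b x) = U (a + b) x := fun a b x => by
    rw [hUgrp a b]; rfl
  have hUinv : ∀ (a : ℝ) (x : 𝓗), U a (U (-a) x) = x := fun a x => by
    rw [hUU, add_neg_cancel, hU0]; rfl
  have hUinner : ∀ (a : ℝ) (x y : 𝓗), ⟪U a x, U a y⟫ = ⟪x, y⟫ := fun a =>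
    (LinearMap.norm_map_iff_inner_map_map (𝕜 := ℂ) (U a)).mp (hUiso a)
  have hUadj : ∀ (a : ℝ) (x y : 𝓗), ⟪U (-a) x, y⟫ = ⟪x, U a y⟫ := fun a x y =>
    calc ⟪U (-a) x, y⟫ = ⟪U a (U (-a) x), U a y⟫ := (hUinner a _ _).symm
      _ = ⟪x, U a y⟫ := by rw [hUinv]
  -- derivative of shifted/negated flows
  have hUderShift : ∀ (x : T.domain) (c r : ℝ),
      HasDerivAt (fun u : ℝ => U (u + c) (x : 𝓗)) ((-Complex.I) • U (r + c) (T x)) r := by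
    intro x c r
    have hh : HasDerivAt (fun u : ℝ => u + c) 1 r := (hasDerivAt_id r).add_const c
    have := (hUder x (r + c)).scomp r hh
    simpa [Function.comp_def] using this
  have hUderNeg : ∀ (x : T.domain) (r : ℝ),
      HasDerivAt (fun u : ℝ => U (-u) (x : 𝓗)) (Complex.I • U (-r) (T x)) r := by
    intro x r
    have hh : HasDerivAt (fun u : ℝ => -u) (-1 : ℝ) r := (hasDerivAt_id r).neg
    have := (hUder x (-r)).scomp r hh
    simpa [neg_one_smul, ← Complex.real_smul, Function.comp_def] using this
  -- invariance of the domain under the group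
  have hinv : ∀ (t : ℝ) (x : T.domain),
      ∃ h : U t (x : 𝓗) ∈ T.domain, T ⟨U t (x : 𝓗), h⟩ = U t (T x) := by
    intro t x
    apply aux_mem hT
    intro z
    -- the function r ↦ ⟪U (-r) z, U (t - r) x⟫ is constant
    have hconst : (fun r : ℝ => ⟪U (-r) (z : 𝓗), U (t - r) (x : 𝓗)⟫)
        = fun _ : ℝ => ⟪(z : 𝓗), U t (x : 𝓗)⟫ := by
      funext r
      rw [hUadj, hUU, add_sub_cancel]
    have hg : HasDerivAt (fun u : ℝ => U (t - u) (x : 𝓗)) (Complex.I • U (t - 0) (T x)) 0 := by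
      have hh : HasDerivAt (fun u : ℝ => t - u) (-1 : ℝ) 0 := by simpa [Pi.sub_def] using (hasDerivAt_const 0 t).sub (hasDerivAt_id 0)
      have := (hUder x (t - 0)).scomp 0 hh
      simpa [neg_one_smul, ← Complex.real_smul, Function.comp_def] using this
    have hder := (hUderNeg z 0).inner ℂ hg
    rw [hconst] at hder
    have h0 := (hasDerivAt_const (0:ℝ) (⟪(z : 𝓗), U t (x : 𝓗)⟫)).unique hder
    simp only [neg_zero, sub_zero, hU0, ContinuousLinearMap.one_apply,
      inner_smul_left, inner_smul_right, Complex.conj_I] at h0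
    have h0' : Complex.I * ⟪(z : 𝓗), U t (T x)⟫ = Complex.I * ⟪(T z : 𝓗), U t (x : 𝓗)⟫ := by
      linear_combination -h0
    exact (mul_left_cancel₀ Complex.I_ne_zero h0').symm
  -- symmetry of P
  have hPsym : ∀ u v : 𝓗, ⟪P u, v⟫ = ⟪u, P v⟫ := fun u v =>
    hPsa.isSymmetric u v
  intro s
  set A : 𝓗 →L[ℂ] 𝓗 := U s ∘L P - P ∘L U s with hAdef
  -- the weak estimate on the domain
  have hweak : ∀ x y : T.domain, ‖⟪(y : 𝓗), A (x : 𝓗)⟫‖ ≤ |s| * d * (‖(y:𝓗)‖ * ‖(x:𝓗)‖) := by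
    intro x y
    set F : ℝ → ℂ := fun r => ⟪U (r - s) (y : 𝓗), P (U r (x : 𝓗))⟫ with hFdef
    set F' : ℝ → ℂ := fun r => -(Complex.I * ⟪C (U (r - s) (y : 𝓗)), U r (x : 𝓗)⟫) with hF'def
    have hF : ∀ r : ℝ, HasDerivAt F (F' r) r := by
      intro r
      obtain ⟨ha1, ha2⟩ := hinv (r - s) y
      obtain ⟨hb1, hb2⟩ := hinv r x
      have hfa : HasDerivAt (fun u : ℝ => U (u - s) (y : 𝓗))
          ((-Complex.I) • U (r - s) (T y)) r := by
        have := hUderShift y (-s) r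
        simpa [sub_eq_add_neg] using this
      have hfb := ((P.restrictScalars ℝ).hasFDerivAt (x := U r (x : 𝓗))).comp_hasDerivAt r (hUder x r)
      have hd := hfa.inner ℂ hfb
      convert hd using 1
      · rfl
      · rfl
      -- algebraic identity for the derivative
      have hCa : C (U (r - s) (y : 𝓗)) = (T ⟨P (U (r - s) (y : 𝓗)), hPD _ ha1⟩ : 𝓗) - P (U (r - s) (T y)) := by
        have h' := hC ⟨U (r - s) (y : 𝓗), ha1⟩
        rw [ha2] at h'
        exact h'
      have h2 : ⟪(T ⟨P (U (r - s) (y : 𝓗)), hPD _ ha1⟩ : 𝓗), U r (x : 𝓗)⟫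
          = ⟪P (U (r - s) (y : 𝓗)), U r (T x)⟫ := by
        have h'' := aux_sym hT ⟨P (U (r - s) (y : 𝓗)), hPD _ ha1⟩ ⟨U r (x : 𝓗), hb1⟩
        rw [hb2] at h''
        exact h''
      have hkey : ⟪U (r - s) (T y), P (U r (x : 𝓗))⟫
          = ⟪U (r - s) (y : 𝓗), P (U r (T x))⟫ - ⟪C (U (r - s) (y : 𝓗)), U r (x : 𝓗)⟫ := by
        rw [← hPsym, show P (U (r - s) (T y))
            = (T ⟨P (U (r - s) (y : 𝓗)), hPD _ ha1⟩ : 𝓗) - C (U (r - s) (y : 𝓗)) by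
          rw [hCa]; abel, inner_sub_left, h2, hPsym]
      simp only [hF'def, ContinuousLinearMap.coe_restrictScalars', Function.comp_apply,
        map_smul, map_neg, Complex.conj_I, inner_smul_right, inner_smul_left]
      rw [hkey]
      ring
    have hbound : ∀ r : ℝ, ‖F' r‖ ≤ d * (‖(y:𝓗)‖ * ‖(x:𝓗)‖) := by
      intro r
      have h1 : ‖F' r‖ = ‖⟪C (U (r - s) (y : 𝓗)), U r (x : 𝓗)⟫‖ := by
        rw [hF'def]; simp
      rw [h1]
      calc ‖⟪C (U (r - s) (y : 𝓗)), U r (x : 𝓗)⟫‖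
          ≤ ‖C (U (r - s) (y : 𝓗))‖ * ‖U r (x : 𝓗)‖ := norm_inner_le_norm _ _
        _ ≤ (‖C‖ * ‖U (r - s) (y : 𝓗)‖) * ‖U r (x : 𝓗)‖ :=
            mul_le_mul_of_nonneg_right (C.le_opNorm _) (norm_nonneg _)
        _ = ‖C‖ * (‖(y:𝓗)‖ * ‖(x:𝓗)‖) := by rw [hUiso, hUiso]; ring
        _ ≤ d * (‖(y:𝓗)‖ * ‖(x:𝓗)‖) :=
            mul_le_mul_of_nonneg_right hCn (by positivity)
    have hmvt := Convex.norm_image_sub_le_of_norm_hasDerivWithin_le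
      (f := F) (f' := F') (s := Set.univ)
      (fun r _ => (hF r).hasDerivWithinAt) (fun r _ => hbound r) convex_univ
      (Set.mem_univ 0) (Set.mem_univ s)
    have hFs : F s = ⟪(y : 𝓗), P (U s (x : 𝓗))⟫ := by
      rw [hFdef]
      simp [hU0]
    have hF0 : F 0 = ⟪(y : 𝓗), U s (P (x : 𝓗))⟫ := by
      rw [hFdef]
      simp only [zero_sub, hU0, ContinuousLinearMap.one_apply]
      rw [hUadj]
    have hdiff : F s - F 0 = -⟪(y : 𝓗), A (x : 𝓗)⟫ := by
      rw [hFs, hF0, hAdef]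
      simp only [ContinuousLinearMap.sub_apply, ContinuousLinearMap.comp_apply]
      rw [inner_sub_right]
      ring
    calc ‖⟪(y : 𝓗), A (x : 𝓗)⟫‖ = ‖F s - F 0‖ := by rw [hdiff]; simp
      _ ≤ d * (‖(y:𝓗)‖ * ‖(x:𝓗)‖) * ‖s - 0‖ := hmvt
      _ = |s| * d * (‖(y:𝓗)‖ * ‖(x:𝓗)‖) := by
          rw [sub_zero, Real.norm_eq_abs]; ring
  -- extend the weak estimate by density
  have hall : ∀ u v : 𝓗, ‖⟪v, A u⟫‖ ≤ |s| * d * (‖v‖ * ‖u‖) := by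
    have hclosed : IsClosed {p : 𝓗 × 𝓗 | ‖⟪p.2, A p.1⟫‖ ≤ |s| * d * (‖p.2‖ * ‖p.1‖)} := by
      apply isClosed_le
      · exact (continuous_inner.comp (continuous_snd.prodMk (A.continuous.comp continuous_fst))).norm
      · fun_prop
    have hsub : (T.domain : Set 𝓗) ×ˢ (T.domain : Set 𝓗)
        ⊆ {p : 𝓗 × 𝓗 | ‖⟪p.2, A p.1⟫‖ ≤ |s| * d * (‖p.2‖ * ‖p.1‖)} := by
      rintro ⟨u, v⟩ ⟨hu, hv⟩
      exact hweak ⟨u, hu⟩ ⟨v, hv⟩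
    intro u v
    have hdp : Dense ((T.domain : Set 𝓗) ×ˢ (T.domain : Set 𝓗)) := hdense.prod hdense
    have : ((u, v) : 𝓗 × 𝓗) ∈ closure ((T.domain : Set 𝓗) ×ˢ (T.domain : Set 𝓗)) := hdp _
    have := (closure_mono hsub) this
    rwa [hclosed.closure_eq] at this
  -- conclude the operator norm bound
  refine A.opNorm_le_bound (by positivity) fun u => ?_
  have h1 := hall u (A u)
  have h2 : ‖(⟪A u, A u⟫ : ℂ)‖ = ‖A u‖ * ‖A u‖ := by
    rw [inner_self_eq_norm_sq_to_K (𝕜 := ℂ), norm_pow, RCLike.norm_ofReal,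
      abs_of_nonneg (norm_nonneg _), sq]
  rw [h2] at h1
  rcases eq_or_lt_of_le (norm_nonneg (A u)) with h3 | h3
  · rw [← h3]; positivity
  · have := (mul_le_mul_iff_of_pos_right h3).mp (by linarith [h1] : ‖A u‖ * ‖A u‖ ≤ (|s| * d * ‖u‖) * ‖A u‖)
    linarith
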